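/- Let (X, d) be a separable complete metric space satisfying link(C) for some C > 0, (Y_n, δ_n), n ∈ ℕ, separable complete metric spaces, p, q ∈ [1, +∞). Let F_0 ⊆ F_1 ⊆ ⋯ be finite subsets of X with ⋃_n F_n dense in X. For each l ∈ ℕ let N(l) ≥ 1 witness link(C) for ε = 2^{-l}, with chains r^l_0(u,v) = u, r^l_1(u,v), …, r^l_{N(l)}(u,v) = v in X satisfying d(r^l_{i-1}(u,v), r^l_i(u,v)) < 2^{-l} for all u, v ∈ X with d(u,v) < C, and set Z_n = {r^l_i(u,v) : u, v ∈ F_n, d(u,v) < C, l ≤ n, 0 ≤ i ≤ N(l)}. Let (b_j)_{j∈ℕ}, (l_j)_{j∈ℕ} be strictly increasing sequences of natural numbers and T_j : Z_{b_j} → ∏_{n=l_j}^{l_{j+1}-1} Y_n maps such that for all x, y ∈ ∏_{j∈ℕ} Z_{b_j}: ∑_j d(x(j), y(j))^p < +∞ if and only if ∑_j δ_q(T_j(x(j)), T_j(y(j)))^q < +∞, where δ_q(r, s) = (∑_{n=l_j}^{l_{j+1}-1} δ_n(r(n), s(n))^q)^{1/q}. Then there exists m ∈ ℕ such that for every k ∈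 ℕ there is N ∈ ℕ such that for all j > N and all u, v ∈ F_{b_j} with k^{-1} ≤ d(u,v) < C, one has 2^{-m} d(u,v)^{p/q} ≤ δ_q(T_j(u), T_j(v)) ≤ 2^m d(u,v)^{p/q}. -/

import Mathlib

section AuxLemmas

/-- Transfer summability between a full sequence (padded by defaults off the range
of a strictly monotone extraction) and the extracted sequence. -/
lemma core_extract {α : ℕ → Type*} (dflt : ∀ j, α j) (e : ℕ → ℕ) (he : StrictMono e)
    (xs ys : ∀ t, α (e t)) :
    ∃ x y : ∀ j, α j, ∀ G : ∀ j, α j → α j → ℝ, (∀ j z, G j z z = 0) →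
      (Summable (fun t => G (e t) (xs t) (ys t)) ↔ Summable (fun j => G j (x j) (y j))) := by
  classical
  refine ⟨fun j => if h : ∃ t, e t = j then h.choose_spec ▸ xs h.choose else dflt j,
          fun j => if h : ∃ t, e t = j then h.choose_spec ▸ ys h.choose else dflt j,
          fun G hG => ?_⟩
  have hcast : ∀ (zs : ∀ t, α (e t)) (t t' : ℕ) (hE : e t' = e t),
      (hE ▸ zs t' : α (e t)) = zs t := by
    intro zs t t' hE
    obtain rfl : t' = t := he.injective hE
    rfl
  have hx : ∀ t, (if h : ∃ t', e t' = e t then h.choose_spec ▸ xs h.choose else dflt (e t))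
      = xs t := by
    intro t
    rw [dif_pos ⟨t, rfl⟩]
    exact hcast xs t _ _
  have hy : ∀ t, (if h : ∃ t', e t' = e t then h.choose_spec ▸ ys h.choose else dflt (e t))
      = ys t := by
    intro t
    rw [dif_pos ⟨t, rfl⟩]
    exact hcast ys t _ _
  have hzero : ∀ j ∉ Set.range e,
      G j (if h : ∃ t, e t = j then h.choose_spec ▸ xs h.choose else dflt j)
        (if h : ∃ t, e t = j then h.choose_spec ▸ ys h.choose else dflt j) = 0 := by
    intro j hj
    have hne : ¬ ∃ t, e t = j := by
      rintro ⟨t, ht⟩; exact hj ⟨t, ht⟩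
    rw [dif_neg hne, dif_neg hne]
    exact hG j _
  have := he.injective.summable_iff (f := fun j =>
    G j (if h : ∃ t, e t = j then h.choose_spec ▸ xs h.choose else dflt j)
      (if h : ∃ t, e t = j then h.choose_spec ▸ ys h.choose else dflt j)) hzero
  rw [← this]
  apply summable_congr
  intro t
  simp only [Function.comp_apply, hx t, hy t]

open Finset in
lemma lq_triangle {Y : ℕ → Type*} [∀ n, MetricSpace (Y n)] {q : ℝ} (hq : 1 ≤ q)
    (s : Finset ℕ) (f g h : ∀ n, Y n) :
    (∑ n ∈ s, dist (f n) (h n) ^ q) ^ (1/q) ≤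
      (∑ n ∈ s, dist (f n) (g n) ^ q) ^ (1/q) + (∑ n ∈ s, dist (g n) (h n) ^ q) ^ (1/q) := by
  have h1 : (∑ n ∈ s, dist (f n) (h n) ^ q) ^ (1/q) ≤
      (∑ n ∈ s, (dist (f n) (g n) + dist (g n) (h n)) ^ q) ^ (1/q) := by
    apply Real.rpow_le_rpow
    · exact Finset.sum_nonneg fun n _ => Real.rpow_nonneg dist_nonneg q
    · apply Finset.sum_le_sum
      intro n _
      exact Real.rpow_le_rpow dist_nonneg (dist_triangle _ _ _) (by linarith)
    · positivity
  refine h1.trans ?_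
  have := Real.Lp_add_le s (fun n => dist (f n) (g n)) (fun n => dist (g n) (h n)) hq
  simpa [abs_of_nonneg, dist_nonneg, abs_of_nonneg (add_nonneg dist_nonneg dist_nonneg)] using this

open Finset in
lemma lq_chain {Y : ℕ → Type*} [∀ n, MetricSpace (Y n)] {q : ℝ} (hq : 1 ≤ q)
    (s : Finset ℕ) (c : ℕ → ∀ n, Y n) (K : ℕ) :
    (∑ n ∈ s, dist (c 0 n) (c K n) ^ q) ^ (1/q) ≤
      ∑ i ∈ Finset.range K, (∑ n ∈ s, dist (c i n) (c (i+1) n) ^ q) ^ (1/q) := by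
  induction K with
  | zero =>
      simp only [Finset.range_zero, Finset.sum_empty]
      have : ∀ n ∈ s, dist (c 0 n) (c 0 n) ^ q = 0 := by
        intro n _; simp [Real.zero_rpow (by linarith : q ≠ 0)]
      rw [Finset.sum_congr rfl this]
      rw [Finset.sum_const_zero, Real.zero_rpow (by positivity : 1/q ≠ 0)]
  | succ K ih =>
      rw [Finset.sum_range_succ]
      calc (∑ n ∈ s, dist (c 0 n) (c (K+1) n) ^ q) ^ (1/q)
          ≤ (∑ n ∈ s, dist (c 0 n) (c K n) ^ q) ^ (1/q)
            + (∑ n ∈ s, dist (c K n) (c (K+1) n) ^ q) ^ (1/q) := lq_triangle hq s _ _ _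
        _ ≤ _ := by exact add_le_add_left ih _

lemma simple_gather {α : ℕ → Type*} (dflt : ∀ j, α j)
    (V W : ∀ j, α j → α j → ℝ) (hVd : ∀ j z, V j z z = 0) (hWd : ∀ j z, W j z z = 0)
    (h : ∀ t N₀ : ℕ, ∃ j, N₀ < j ∧ ∃ x y : α j,
      0 ≤ V j x y ∧ V j x y ≤ ((2:ℝ)^t)⁻¹ ∧ 1 ≤ W j x y) :
    ∃ x y : ∀ j, α j, Summable (fun j => V j (x j) (y j)) ∧
      ¬ Summable (fun j => W j (x j) (y j)) := by
  classical
  choose Jf hJ h2 using h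
  choose xf yf hV0 hVle hWge using h2
  -- extraction
  let e : ℕ → ℕ := fun t => Nat.rec (Jf 0 0) (fun t ih => Jf (t+1) ih) t
  have he2 : ∀ t, e (t+1) = Jf (t+1) (e t) := fun t => rfl
  have hmono : StrictMono e := strictMono_nat_of_lt_succ (fun t => hJ (t+1) (e t))
  let xs : ∀ t, α (e t) := fun t => Nat.rec (motive := fun t => α (e t)) (xf 0 0)
    (fun t _ => xf (t+1) (e t)) t
  let ys : ∀ t, α (e t) := fun t => Nat.rec (motive := fun t => α (e t)) (yf 0 0)
    (fun t _ => yf (t+1) (e t)) t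
  have hxs0 : xs 0 = xf 0 0 := rfl
  have hxsS : ∀ t, xs (t+1) = xf (t+1) (e t) := fun t => rfl
  have hys0 : ys 0 = yf 0 0 := rfl
  have hysS : ∀ t, ys (t+1) = yf (t+1) (e t) := fun t => rfl
  have hVt : ∀ t, 0 ≤ V (e t) (xs t) (ys t) ∧ V (e t) (xs t) (ys t) ≤ ((2:ℝ)^t)⁻¹ := by
    intro t
    cases t with
    | zero => exact ⟨hV0 0 0, hVle 0 0⟩
    | succ t => exact ⟨hV0 (t+1) (e t), hVle (t+1) (e t)⟩
  have hWt : ∀ t, 1 ≤ W (e t) (xs t) (ys t) := by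
    intro t
    cases t with
    | zero => exact hWge 0 0
    | succ t => exact hWge (t+1) (e t)
  obtain ⟨x, y, hxy⟩ := core_extract dflt e hmono xs ys
  refine ⟨x, y, ?_, ?_⟩
  · rw [← hxy V hVd]
    have hg : Summable (fun t : ℕ => ((2:ℝ)^t)⁻¹) := by
      have := summable_geometric_of_lt_one (by norm_num : (0:ℝ) ≤ 1/2) (by norm_num : (1:ℝ)/2 < 1)
      refine this.congr (fun t => ?_)
      rw [one_div, inv_pow]
    exact Summable.of_nonneg_of_le (fun t => (hVt t).1) (fun t => (hVt t).2) hg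
  · intro hs
    rw [← hxy W hWd] at hs
    have := hs.tendsto_atTop_zero.eventually_lt_const (by norm_num : (0:ℝ) < 1)
    obtain ⟨t, ht⟩ := this.exists
    exact absurd (hWt t) (not_le.mpr ht)

lemma gather {α : ℕ → Type*} (dflt : ∀ j, α j)
    (V W : ∀ j, α j → α j → ℝ) (hVd : ∀ j z, V j z z = 0) (hWd : ∀ j z, W j z z = 0)
    (M : ℝ) (hM : 0 ≤ M)
    (h : ∀ m : ℕ, ∃ c : ℝ, 0 < c ∧ ∀ N₀ : ℕ, ∃ j, N₀ < j ∧ ∃ x y : α j,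
      0 ≤ V j x y ∧ V j x y ≤ ((2:ℝ)^m)⁻¹ * W j x y ∧ c ≤ W j x y ∧ W j x y ≤ M) :
    ∃ x y : ∀ j, α j, Summable (fun j => V j (x j) (y j)) ∧
      ¬ Summable (fun j => W j (x j) (y j)) := by
  classical
  choose cm hc hsel using h
  choose Jf hJ h2 using hsel
  choose xf yf hV0 hVle hcW hWM using h2
  -- the weight attached to the pair selected for level `m` past coordinate `prev`
  set wv : ℕ → ℕ → ℝ := fun m prev => W (Jf m prev) (xf m prev) (yf m prev) with hwv
  -- state machine: (level, accumulated weight in current level, previous coordinate)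
  set S : ℕ → ℕ × ℝ × ℕ := fun t => Nat.rec (motive := fun _ => ℕ × ℝ × ℕ) (0, (0:ℝ), 0)
    (fun _ ih => if 1 ≤ ih.2.1 + wv ih.1 ih.2.2
      then (ih.1 + 1, (0:ℝ), Jf ih.1 ih.2.2)
      else (ih.1, ih.2.1 + wv ih.1 ih.2.2, Jf ih.1 ih.2.2)) t with hS
  have hS0 : S 0 = (0, (0:ℝ), 0) := rfl
  have hSsucc : ∀ t, S (t+1) = if 1 ≤ (S t).2.1 + wv (S t).1 (S t).2.2
      then ((S t).1 + 1, (0:ℝ), Jf (S t).1 (S t).2.2)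
      else ((S t).1, (S t).2.1 + wv (S t).1 (S t).2.2, Jf (S t).1 (S t).2.2) := fun t => rfl
  -- extraction and selected pairs
  set e : ℕ → ℕ := fun t => Jf (S t).1 (S t).2.2 with he'
  set xs : ∀ t, α (e t) := fun t => xf (S t).1 (S t).2.2 with hxs
  set ys : ∀ t, α (e t) := fun t => yf (S t).1 (S t).2.2 with hys
  -- branch case analysis
  have hcase : ∀ t, (1 ≤ (S t).2.1 + wv (S t).1 (S t).2.2 ∧
        S (t+1) = ((S t).1 + 1, (0:ℝ), e t)) ∨
      (¬ (1 ≤ (S t).2.1 + wv (S t).1 (S t).2.2) ∧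
        S (t+1) = ((S t).1, (S t).2.1 + wv (S t).1 (S t).2.2, e t)) := by
    intro t
    by_cases h1 : 1 ≤ (S t).2.1 + wv (S t).1 (S t).2.2
    · left; exact ⟨h1, by rw [hSsucc t, if_pos h1]⟩
    · right; exact ⟨h1, by rw [hSsucc t, if_neg h1]⟩
  have hwt : ∀ t, W (e t) (xs t) (ys t) = wv (S t).1 (S t).2.2 := fun t => rfl
  -- basic bounds for the selected pairs
  have hwpos : ∀ t, 0 < wv (S t).1 (S t).2.2 :=
    fun t => lt_of_lt_of_le (hc (S t).1) (hcW (S t).1 (S t).2.2)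
  have hwle : ∀ t, wv (S t).1 (S t).2.2 ≤ M := fun t => hWM (S t).1 (S t).2.2
  have hv0 : ∀ t, 0 ≤ V (e t) (xs t) (ys t) := fun t => hV0 (S t).1 (S t).2.2
  have hvle : ∀ t, V (e t) (xs t) (ys t) ≤ ((2:ℝ)^(S t).1)⁻¹ * wv (S t).1 (S t).2.2 :=
    fun t => hVle (S t).1 (S t).2.2
  -- accumulator invariant
  have hacc : ∀ t, 0 ≤ (S t).2.1 ∧ (S t).2.1 < 1 := by
    intro t
    induction t with
    | zero => rw [hS0]; norm_num
    | succ t ih =>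
        rcases hcase t with ⟨h1, heq⟩ | ⟨h1, heq⟩
        · rw [heq]; norm_num
        · rw [heq]
          refine ⟨add_nonneg ih.1 (hwpos t).le, by simpa using not_le.mp h1⟩
  -- strict monotonicity of the coordinates
  have hp3 : ∀ t, (S (t+1)).2.2 = e t := by
    intro t
    rcases hcase t with ⟨_, heq⟩ | ⟨_, heq⟩ <;> rw [heq]
  have hemono : StrictMono e := by
    apply strictMono_nat_of_lt_succ
    intro t
    have : e (t+1) = Jf (S (t+1)).1 (S (t+1)).2.2 := rfl
    rw [this, hp3 t]
    exact hJ (S (t+1)).1 (e t)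
  -- level monotone
  have hmS : ∀ t, (S t).1 ≤ (S (t+1)).1 := by
    intro t
    rcases hcase t with ⟨_, heq⟩ | ⟨_, heq⟩ <;> rw [heq] <;> simp
  have hmmono : Monotone (fun t => (S t).1) := monotone_nat_of_le_succ hmS
  -- partial sums of W dominate the level
  have hWsum : ∀ T, ((S T).1 : ℝ) + (S T).2.1 ≤
      ∑ t ∈ Finset.range T, W (e t) (xs t) (ys t) := by
    intro T
    induction T with
    | zero => rw [hS0]; simp
    | succ T ih =>
        rw [Finset.sum_range_succ, hwt T]
        rcases hcase T with ⟨h1, heq⟩ | ⟨h1, heq⟩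
        · rw [heq]; push_cast
          linarith
        · rw [heq]; push_cast
          linarith
  -- level is unbounded
  have hunb : ∀ k : ℕ, ∃ T, k ≤ (S T).1 := by
    by_cases hdich : ∀ t₀ : ℕ, ∃ t, t₀ ≤ t ∧ (S t₀).1 < (S t).1
    · intro k
      choose nxt hnxt1 hnxt2 using hdich
      set g : ℕ → ℕ := fun k => Nat.rec (motive := fun _ => ℕ) 0 (fun _ ih => nxt ih) k with hg
      have : ∀ k, k ≤ (S (g k)).1 := by
        intro k
        induction k with
        | zero => exact Nat.zero_le _
        | succ k ih =>
            have : (S (g k)).1 < (S (nxt (g k))).1 := hnxt2 (g k)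
            have hgs : g (k+1) = nxt (g k) := rfl
            rw [hgs]; omega
      exact ⟨g k, this k⟩
    · exfalso
      push_neg at hdich
      obtain ⟨t₀, ht₀⟩ := hdich
      -- level is eventually constant, equal to m* := (S t₀).1
      have hconst : ∀ t, t₀ ≤ t → (S t).1 = (S t₀).1 := by
        intro t ht
        exact le_antisymm (by simpa using ht₀ t ht) (hmmono ht)
      -- all steps past t₀ are "else" branch, so accumulator grows by ≥ c each step
      have hgrow : ∀ s : ℕ, (s : ℝ) * cm (S t₀).1 ≤ (S (t₀ + s)).2.1 := by
        intro s
        induction s with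
        | zero => simpa using (hacc t₀).1
        | succ s ih =>
            have htle : t₀ ≤ t₀ + s := Nat.le_add_right _ _
            rcases hcase (t₀ + s) with ⟨h1, heq⟩ | ⟨h1, heq⟩
            · -- branch 1 impossible: level would increase
              exfalso
              have h2' : (S (t₀ + s + 1)).1 = (S (t₀ + s)).1 + 1 := by rw [heq]
              have := hconst (t₀ + s + 1) (by omega)
              have := hconst (t₀ + s) htle
              omega
            · have hlev : (S (t₀ + s)).1 = (S t₀).1 := hconst _ htle
              have hcle : cm (S t₀).1 ≤ wv (S (t₀+s)).1 (S (t₀+s)).2.2 := by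
                rw [hlev]; exact hlev ▸ hcW (S (t₀+s)).1 (S (t₀+s)).2.2
              have : (S (t₀ + s + 1)).2.1 = (S (t₀+s)).2.1 + wv (S (t₀+s)).1 (S (t₀+s)).2.2 := by
                rw [heq]
              rw [show t₀ + (s+1) = t₀ + s + 1 from rfl, this]
              push_cast
              have hcle' : cm (S t₀).1 ≤ wv (S (t₀+s)).1 (S (t₀+s)).2.2 := by
                have := hcW (S (t₀+s)).1 (S (t₀+s)).2.2
                rwa [hlev] at this
              linarith
      obtain ⟨s, hs⟩ := exists_nat_ge (1 / cm (S t₀).1)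
      have hcpos := hc (S t₀).1
      have : (1:ℝ) ≤ (s:ℝ) * cm (S t₀).1 := by
        rw [div_le_iff₀ hcpos] at hs
        linarith [hs]
      have := (hgrow s).trans_lt (hacc (t₀ + s)).2
      linarith
  -- V-side partial sums are bounded
  have hVsum : ∀ T, ∑ t ∈ Finset.range T, V (e t) (xs t) (ys t) ≤
      (1 + M) * (∑ i ∈ Finset.range (S T).1, (1/2:ℝ)^i) + ((2:ℝ)^(S T).1)⁻¹ * (S T).2.1 := by
    intro T
    induction T with
    | zero => rw [hS0]; simp
    | succ T ih =>
        rw [Finset.sum_range_succ]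
        have hvT := hvle T
        rcases hcase T with ⟨h1, heq⟩ | ⟨h1, heq⟩
        · rw [heq]
          rw [Finset.sum_range_succ]
          have hinv : ((2:ℝ)^(S T).1)⁻¹ = (1/2:ℝ)^(S T).1 := by
            rw [one_div, inv_pow]
          have hkey : ((2:ℝ)^(S T).1)⁻¹ * (S T).2.1 + V (e T) (xs T) (ys T) ≤
              (1 + M) * (1/2:ℝ)^(S T).1 := by
            have hb1 : V (e T) (xs T) (ys T) ≤ ((2:ℝ)^(S T).1)⁻¹ * wv (S T).1 (S T).2.2 := hvT
            have hb2 : wv (S T).1 (S T).2.2 ≤ M := hwle T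
            have hb3 : (S T).2.1 < 1 := (hacc T).2
            have hpos : (0:ℝ) ≤ ((2:ℝ)^(S T).1)⁻¹ := by positivity
            calc ((2:ℝ)^(S T).1)⁻¹ * (S T).2.1 + V (e T) (xs T) (ys T)
                ≤ ((2:ℝ)^(S T).1)⁻¹ * (S T).2.1 + ((2:ℝ)^(S T).1)⁻¹ * wv (S T).1 (S T).2.2 := by
                  linarith
              _ = ((2:ℝ)^(S T).1)⁻¹ * ((S T).2.1 + wv (S T).1 (S T).2.2) := by ring
              _ ≤ ((2:ℝ)^(S T).1)⁻¹ * (1 + M) := by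
                  apply mul_le_mul_of_nonneg_left _ hpos
                  linarith
              _ = (1 + M) * (1/2:ℝ)^(S T).1 := by rw [hinv]; ring
          linarith [ih, hkey]
        · rw [heq]
          have : ((2:ℝ)^(S T).1)⁻¹ * ((S T).2.1 + wv (S T).1 (S T).2.2) =
              ((2:ℝ)^(S T).1)⁻¹ * (S T).2.1 + ((2:ℝ)^(S T).1)⁻¹ * wv (S T).1 (S T).2.2 := by ring
          rw [this]
          linarith
  -- summability of the V side over t
  have hVsummable : Summable (fun t => V (e t) (xs t) (ys t)) := by
    apply summable_of_sum_range_le hv0 (c := (1 + M) * 2 + 1)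
    intro T
    refine (hVsum T).trans ?_
    have h1 : (∑ i ∈ Finset.range (S T).1, (1/2:ℝ)^i) ≤ 2 := sum_geometric_two_le _
    have h2 : ((2:ℝ)^(S T).1)⁻¹ ≤ 1 := by
      rw [inv_le_one_iff₀]; right; exact one_le_pow₀ (by norm_num)
    have h3 := (hacc T).1
    have h4 := (hacc T).2
    have h5 : (0:ℝ) ≤ 1 + M := by linarith
    nlinarith
  -- non-summability of the W side over t
  have hWnotsummable : ¬ Summable (fun t => W (e t) (xs t) (ys t)) := by
    intro hs
    obtain ⟨k, hk⟩ := exists_nat_gt (∑' t, W (e t) (xs t) (ys t))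
    obtain ⟨T, hT⟩ := hunb k
    have hpart : ∑ t ∈ Finset.range T, W (e t) (xs t) (ys t) ≤ ∑' t, W (e t) (xs t) (ys t) :=
      Summable.sum_le_tsum _ (fun t _ => (hwpos t).le) hs
    have : (k:ℝ) ≤ ((S T).1 : ℝ) := by exact_mod_cast hT
    have := hWsum T
    have h3 := (hacc T).1
    linarith
  obtain ⟨x, y, hxy⟩ := core_extract dflt e hemono xs ys
  refine ⟨x, y, ?_, ?_⟩
  · rw [← hxy V hVd]; exact hVsummable
  · intro hs
    exact hWnotsummable ((hxy W hWd).mpr hs)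

end AuxLemmas

/-- `(X, dist)` satisfies `link(C)`: for every `ε > 0` there is `N ≥ 1` such that any
two points at distance `< C` can be joined by a chain of `N` steps each of length `< ε`. -/
def Link (X : Type*) [MetricSpace X] (C : ℝ) : Prop :=
  ∀ ε : ℝ, 0 < ε → ∃ N : ℕ, 1 ≤ N ∧
    ∀ u v : X, dist u v < C → ∃ r : ℕ → X, r 0 = u ∧ r N = v ∧
      ∀ i, 1 ≤ i → i ≤ N → dist (r (i - 1)) (r i) < ε

theorem stmt11
    {X : Type*} [MetricSpace X] [TopologicalSpace.SeparableSpace X] [CompleteSpace X]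
    {Y : ℕ → Type*} [∀ n, MetricSpace (Y n)]
    [∀ n, TopologicalSpace.SeparableSpace (Y n)] [∀ n, CompleteSpace (Y n)]
    (p q : ℝ) (hp : 1 ≤ p) (hq : 1 ≤ q)
    (C : ℝ) (hC : 0 < C) (hlink : Link X C)
    (F : ℕ → Finset X) (hF : ∀ n, F n ⊆ F (n + 1))
    (hFdense : Dense (⋃ n, (F n : Set X)))
    -- for each level `lvl`, `N lvl ≥ 1` witnesses `link(C)` for `ε = 2⁻ˡᵛˡ`,
    -- with chains `r lvl u v 0 = u, …, r lvl u v (N lvl) = v`: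
    (N : ℕ → ℕ) (hN : ∀ lvl, 1 ≤ N lvl)
    (r : ℕ → X → X → ℕ → X)
    (hr0 : ∀ lvl u v, dist u v < C → r lvl u v 0 = u)
    (hrN : ∀ lvl u v, dist u v < C → r lvl u v (N lvl) = v)
    (hrstep : ∀ lvl u v, dist u v < C → ∀ i, 1 ≤ i → i ≤ N lvl →
      dist (r lvl u v (i - 1)) (r lvl u v i) < ((2 : ℝ) ^ lvl)⁻¹)
    (Z : ℕ → Set X)
    (hZ : ∀ n, Z n = {z : X | ∃ u ∈ F n, ∃ v ∈ F n, ∃ lvl ≤ n, ∃ i ≤ N lvl,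
      dist u v < C ∧ z = r lvl u v i})
    (hFZ : ∀ n, (F n : Set X) ⊆ Z n) (hZne : ∀ n, (Z n).Nonempty)
    (b l : ℕ → ℕ) (hb : StrictMono b) (hl : StrictMono l)
    (T : ∀ j, Z (b j) → ∀ n, Y n)
    (hT : ∀ x y : ∀ j, Z (b j),
      (Summable fun j => dist (x j : X) (y j : X) ^ p) ↔
      (Summable fun j =>
        ((∑ n ∈ Finset.Ico (l j) (l (j + 1)),
            dist (T j (x j) n) (T j (y j) n) ^ q) ^ (1 / q)) ^ q)) :
    ∃ m : ℕ, ∀ k : ℕ, 1 ≤ k → ∃ N₀ : ℕ, ∀ j, N₀ < j →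
      ∀ u v : X, ∀ hu : u ∈ F (b j), ∀ hv : v ∈ F (b j),
        (k : ℝ)⁻¹ ≤ dist u v → dist u v < C →
        ((2 : ℝ) ^ m)⁻¹ * dist u v ^ (p / q) ≤
            (∑ n ∈ Finset.Ico (l j) (l (j + 1)),
              dist (T j ⟨u, hFZ (b j) (Finset.mem_coe.mpr hu)⟩ n)
                   (T j ⟨v, hFZ (b j) (Finset.mem_coe.mpr hv)⟩ n) ^ q) ^ (1 / q) ∧
          (∑ n ∈ Finset.Ico (l j) (l (j + 1)),
              dist (T j ⟨u, hFZ (b j) (Finset.mem_coe.mpr hu)⟩ n)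
                   (T j ⟨v, hFZ (b j) (Finset.mem_coe.mpr hv)⟩ n) ^ q) ^ (1 / q) ≤
            (2 : ℝ) ^ m * dist u v ^ (p / q) := by
  classical
  have hq0 : (0:ℝ) < q := lt_of_lt_of_le one_pos hq
  have hp0 : (0:ℝ) < p := lt_of_lt_of_le one_pos hp
  -- default elements
  have dflt : ∀ j : ℕ, Z (b j) := fun j => ⟨(hZne (b j)).some, (hZne (b j)).some_mem⟩
  -- diagonal vanishing
  have hVpd : ∀ (j : ℕ) (z : Z (b j)), dist (z:X) (z:X) ^ p = 0 := by
    intro j z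
    rw [dist_self, Real.zero_rpow (ne_of_gt hp0)]
  have hSgd : ∀ (j : ℕ) (z : Z (b j)),
      (∑ n ∈ Finset.Ico (l j) (l (j+1)), dist (T j z n) (T j z n) ^ q) = 0 := by
    intro j z
    apply Finset.sum_eq_zero
    intro n _
    rw [dist_self, Real.zero_rpow (ne_of_gt hq0)]
  -- reformulation of the summability equivalence
  have hTiff : ∀ x y : ∀ j, Z (b j),
      (Summable fun j => dist (x j : X) (y j : X) ^ p) ↔
      (Summable fun j => ∑ n ∈ Finset.Ico (l j) (l (j+1)),
        dist (T j (x j) n) (T j (y j) n) ^ q) := by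
    intro x y
    rw [hT x y]
    have heq : (fun j => ((∑ n ∈ Finset.Ico (l j) (l (j+1)),
          dist (T j (x j) n) (T j (y j) n) ^ q) ^ (1/q)) ^ q)
        = fun j => ∑ n ∈ Finset.Ico (l j) (l (j+1)),
          dist (T j (x j) n) (T j (y j) n) ^ q := by
      funext j
      rw [← Real.rpow_mul (Finset.sum_nonneg fun n _ => Real.rpow_nonneg dist_nonneg q),
        one_div_mul_cancel (ne_of_gt hq0), Real.rpow_one]
    rw [heq]
  -- chain points lie in Z (b j)
  have hmemZ : ∀ (j : ℕ) (u v : X), u ∈ F (b j) → v ∈ F (b j) → dist u v < C →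
      ∀ lvl, lvl ≤ b j → ∀ i, i ≤ N lvl → r lvl u v i ∈ Z (b j) := by
    intro j u v hu hv hd lvl hlvl i hi
    rw [hZ]
    exact ⟨u, hu, v, hv, lvl, hlvl, i, hi, hd, rfl⟩
  -- the cap: uniformly bounded blocks for pairs of F-points at distance < C
  have cap : ∃ M : ℝ, 0 ≤ M ∧ ∃ N₁ : ℕ, ∀ j, N₁ < j →
      ∀ u v : X, ∀ hu : u ∈ F (b j), ∀ hv : v ∈ F (b j), dist u v < C →
      (∑ n ∈ Finset.Ico (l j) (l (j+1)),
        dist (T j ⟨u, hFZ (b j) (Finset.mem_coe.mpr hu)⟩ n)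
             (T j ⟨v, hFZ (b j) (Finset.mem_coe.mpr hv)⟩ n) ^ q) ≤ M := by
    by_contra hcon
    push_neg at hcon
    have key : ∀ t N₀ : ℕ, ∃ j, N₀ < j ∧ ∃ x y : Z (b j),
        0 ≤ dist (x:X) (y:X) ^ p ∧ dist (x:X) (y:X) ^ p ≤ ((2:ℝ)^t)⁻¹ ∧
        1 ≤ ∑ n ∈ Finset.Ico (l j) (l (j+1)), dist (T j x n) (T j y n) ^ q := by
      intro t N₀
      obtain ⟨j, hj, u, v, hu, hv, hd, hbig⟩ := hcon ((N t : ℝ) ^ q) (by positivity) (max N₀ t)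
      have hjN : N₀ < j := lt_of_le_of_lt (le_max_left _ _) hj
      have hjt : t ≤ b j :=
        le_trans (le_of_lt (lt_of_le_of_lt (le_max_right _ _) hj)) hb.le_apply
      have hmem : ∀ i, i ≤ N t → r t u v i ∈ Z (b j) := hmemZ j u v hu hv hd t hjt
      have hNt0 : (0:ℝ) < (N t : ℝ) := by exact_mod_cast hN t
      set c : ℕ → ∀ n, Y n :=
        fun i => T j ⟨r t u v (min i (N t)), hmem _ (min_le_right _ _)⟩ with hcdef
      have hc0 : c 0 = T j ⟨u, hFZ (b j) (Finset.mem_coe.mpr hu)⟩ := by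
        apply congrArg (T j)
        apply Subtype.ext
        show r t u v (min 0 (N t)) = u
        rw [min_eq_left (Nat.zero_le _)]
        exact hr0 t u v hd
      have hcN : c (N t) = T j ⟨v, hFZ (b j) (Finset.mem_coe.mpr hv)⟩ := by
        apply congrArg (T j)
        apply Subtype.ext
        show r t u v (min (N t) (N t)) = v
        rw [min_self]
        exact hrN t u v hd
      have hchain := lq_chain hq (Finset.Ico (l j) (l (j+1))) c (N t)
      rw [hc0, hcN] at hchain
      -- (block of (u,v))^{1/q} exceeds N t
      have hρ : (N t : ℝ) <
          (∑ n ∈ Finset.Ico (l j) (l (j+1)),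
            dist (T j ⟨u, hFZ (b j) (Finset.mem_coe.mpr hu)⟩ n)
                 (T j ⟨v, hFZ (b j) (Finset.mem_coe.mpr hv)⟩ n) ^ q) ^ (1/q) := by
        have := Real.rpow_lt_rpow (by positivity) hbig (by positivity : (0:ℝ) < 1/q)
        rwa [← Real.rpow_mul hNt0.le, mul_one_div_cancel (ne_of_gt hq0),
          Real.rpow_one] at this
      -- extract a good step of the chain
      obtain ⟨i, hi, hstep⟩ := Finset.exists_le_of_sum_le
        (f := fun _ : ℕ => (∑ n ∈ Finset.Ico (l j) (l (j+1)),
            dist (T j ⟨u, hFZ (b j) (Finset.mem_coe.mpr hu)⟩ n)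
                 (T j ⟨v, hFZ (b j) (Finset.mem_coe.mpr hv)⟩ n) ^ q) ^ (1/q) / (N t : ℝ))
        (g := fun i => (∑ n ∈ Finset.Ico (l j) (l (j+1)),
            dist (c i n) (c (i+1) n) ^ q) ^ (1/q))
        (s := Finset.range (N t))
        ⟨0, Finset.mem_range.mpr (hN t)⟩
        (by
          rw [Finset.sum_const, Finset.card_range, nsmul_eq_mul,
            mul_div_cancel₀ _ (ne_of_gt hNt0)]
          exact hchain)
      have hiN : i < N t := Finset.mem_range.mp hi
      have hci : c i = T j ⟨r t u v i, hmem i hiN.le⟩ := by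
        apply congrArg (T j)
        apply Subtype.ext
        show r t u v (min i (N t)) = r t u v i
        rw [min_eq_left hiN.le]
      have hci1 : c (i+1) = T j ⟨r t u v (i+1), hmem (i+1) hiN⟩ := by
        apply congrArg (T j)
        apply Subtype.ext
        show r t u v (min (i+1) (N t)) = r t u v (i+1)
        rw [min_eq_left hiN]
      rw [hci, hci1] at hstep
      refine ⟨j, hjN, ⟨r t u v i, hmem i hiN.le⟩, ⟨r t u v (i+1), hmem (i+1) hiN⟩,
        by positivity, ?_, ?_⟩
      · -- small distance in X
        show dist (r t u v i) (r t u v (i+1)) ^ p ≤ ((2:ℝ)^t)⁻¹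
        have hdist : dist (r t u v i) (r t u v (i+1)) < ((2:ℝ)^t)⁻¹ := by
          have := hrstep t u v hd (i+1) (Nat.le_add_left _ _) hiN
          simpa using this
        have h2t : (0:ℝ) < ((2:ℝ)^t)⁻¹ := by positivity
        calc dist (r t u v i) (r t u v (i+1)) ^ p
            ≤ (((2:ℝ)^t)⁻¹) ^ p := Real.rpow_le_rpow dist_nonneg hdist.le hp0.le
          _ ≤ (((2:ℝ)^t)⁻¹) ^ (1:ℝ) := by
              apply Real.rpow_le_rpow_of_exponent_ge h2t _ hp
              rw [inv_le_one_iff₀]; right; exact one_le_pow₀ (by norm_num)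
          _ = ((2:ℝ)^t)⁻¹ := Real.rpow_one _
      · -- block weight at least 1
        show (1:ℝ) ≤ ∑ n ∈ Finset.Ico (l j) (l (j+1)),
          dist (T j ⟨r t u v i, hmem i hiN.le⟩ n) (T j ⟨r t u v (i+1), hmem (i+1) hiN⟩ n) ^ q
        have hs0 : (0:ℝ) ≤ ∑ n ∈ Finset.Ico (l j) (l (j+1)),
            dist (T j ⟨r t u v i, hmem i hiN.le⟩ n)
                 (T j ⟨r t u v (i+1), hmem (i+1) hiN⟩ n) ^ q :=
          Finset.sum_nonneg fun n _ => Real.rpow_nonneg dist_nonneg q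
        have h1ρ : (1:ℝ) ≤ (∑ n ∈ Finset.Ico (l j) (l (j+1)),
            dist (T j ⟨r t u v i, hmem i hiN.le⟩ n)
                 (T j ⟨r t u v (i+1), hmem (i+1) hiN⟩ n) ^ q) ^ (1/q) :=
          le_trans (le_of_lt ((one_lt_div hNt0).mpr hρ)) hstep
        have := Real.rpow_le_rpow zero_le_one h1ρ hq0.le
        rwa [Real.one_rpow, ← Real.rpow_mul hs0, one_div_mul_cancel (ne_of_gt hq0),
          Real.rpow_one] at this
    obtain ⟨x, y, hsum, hnot⟩ := simple_gather dflt
      (fun j (x y : Z (b j)) => dist (x:X) (y:X) ^ p)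
      (fun j (x y : Z (b j)) => ∑ n ∈ Finset.Ico (l j) (l (j+1)),
        dist (T j x n) (T j y n) ^ q) hVpd hSgd key
    exact hnot ((hTiff x y).mp hsum)
  -- upper estimate claim
  have upper : ∃ mu : ℕ, ∀ k : ℕ, 1 ≤ k → ∃ N₀ : ℕ, ∀ j, N₀ < j →
      ∀ u v : X, ∀ hu : u ∈ F (b j), ∀ hv : v ∈ F (b j),
        (k : ℝ)⁻¹ ≤ dist u v → dist u v < C →
        (∑ n ∈ Finset.Ico (l j) (l (j + 1)),
            dist (T j ⟨u, hFZ (b j) (Finset.mem_coe.mpr hu)⟩ n)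
                 (T j ⟨v, hFZ (b j) (Finset.mem_coe.mpr hv)⟩ n) ^ q) ≤
          ((2:ℝ) ^ mu) ^ q * dist u v ^ p := by
    obtain ⟨M, hM0, N₁, hcap⟩ := cap
    by_contra hcon
    push_neg at hcon
    have hgath : ∀ m : ℕ, ∃ c : ℝ, 0 < c ∧ ∀ N₀ : ℕ, ∃ j, N₀ < j ∧ ∃ x y : Z (b j),
        0 ≤ dist (x:X) (y:X) ^ p ∧
        dist (x:X) (y:X) ^ p ≤ ((2:ℝ)^m)⁻¹ *
          (∑ n ∈ Finset.Ico (l j) (l (j+1)), dist (T j x n) (T j y n) ^ q) ∧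
        c ≤ (∑ n ∈ Finset.Ico (l j) (l (j+1)), dist (T j x n) (T j y n) ^ q) ∧
        (∑ n ∈ Finset.Ico (l j) (l (j+1)), dist (T j x n) (T j y n) ^ q) ≤ M := by
      intro m
      obtain ⟨k, hk1, hbad⟩ := hcon m
      have hk0 : (0:ℝ) < (k:ℝ) := by exact_mod_cast Nat.lt_of_lt_of_le Nat.zero_lt_one hk1
      refine ⟨((2:ℝ)^m) ^ q * ((k:ℝ)⁻¹) ^ p, by positivity, fun N₀ => ?_⟩
      obtain ⟨j, hj, u, v, hu, hv, hd1, hd2, hgt⟩ := hbad (max N₀ N₁)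
      have hjN : N₀ < j := lt_of_le_of_lt (le_max_left _ _) hj
      have hjN₁ : N₁ < j := lt_of_le_of_lt (le_max_right _ _) hj
      refine ⟨j, hjN, ⟨u, hFZ (b j) (Finset.mem_coe.mpr hu)⟩,
        ⟨v, hFZ (b j) (Finset.mem_coe.mpr hv)⟩, by positivity, ?_, ?_, ?_⟩
      · show dist u v ^ p ≤ ((2:ℝ)^m)⁻¹ * _
        have hS0 : (0:ℝ) ≤ ∑ n ∈ Finset.Ico (l j) (l (j+1)),
            dist (T j ⟨u, hFZ (b j) (Finset.mem_coe.mpr hu)⟩ n)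
                 (T j ⟨v, hFZ (b j) (Finset.mem_coe.mpr hv)⟩ n) ^ q :=
          Finset.sum_nonneg fun n _ => Real.rpow_nonneg dist_nonneg q
        have hA : (0:ℝ) < ((2:ℝ)^m) ^ q := by positivity
        have h1 : dist u v ^ p < (((2:ℝ)^m) ^ q)⁻¹ *
            (∑ n ∈ Finset.Ico (l j) (l (j+1)),
              dist (T j ⟨u, hFZ (b j) (Finset.mem_coe.mpr hu)⟩ n)
                   (T j ⟨v, hFZ (b j) (Finset.mem_coe.mpr hv)⟩ n) ^ q) := by
          rw [inv_mul_eq_div, lt_div_iff₀' hA]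
          exact hgt
        have h2 : (((2:ℝ)^m) ^ q)⁻¹ ≤ ((2:ℝ)^m)⁻¹ := by
          apply inv_anti₀ (by positivity)
          have := Real.rpow_le_rpow_of_exponent_le (one_le_pow₀ (by norm_num : (1:ℝ) ≤ 2))
            hq (y := (1:ℝ)) (x := (2:ℝ)^m)
          rwa [Real.rpow_one] at this
        exact h1.le.trans (mul_le_mul_of_nonneg_right h2 hS0)
      · show ((2:ℝ)^m) ^ q * ((k:ℝ)⁻¹) ^ p ≤ _
        refine le_trans ?_ hgt.le
        apply mul_le_mul_of_nonneg_left _ (by positivity)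
        exact Real.rpow_le_rpow (by positivity) hd1 hp0.le
      · show _ ≤ M
        exact hcap j hjN₁ u v hu hv hd2
    obtain ⟨x, y, hsum, hnot⟩ := gather dflt
      (fun j (x y : Z (b j)) => dist (x:X) (y:X) ^ p)
      (fun j (x y : Z (b j)) => ∑ n ∈ Finset.Ico (l j) (l (j+1)),
        dist (T j x n) (T j y n) ^ q) hVpd hSgd M hM0 hgath
    exact hnot ((hTiff x y).mp hsum)
  -- lower estimate claim
  have lower : ∃ ml : ℕ, ∀ k : ℕ, 1 ≤ k → ∃ N₀ : ℕ, ∀ j, N₀ < j →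
      ∀ u v : X, ∀ hu : u ∈ F (b j), ∀ hv : v ∈ F (b j),
        (k : ℝ)⁻¹ ≤ dist u v → dist u v < C →
        (((2:ℝ) ^ ml)⁻¹) ^ q * dist u v ^ p ≤
          (∑ n ∈ Finset.Ico (l j) (l (j + 1)),
            dist (T j ⟨u, hFZ (b j) (Finset.mem_coe.mpr hu)⟩ n)
                 (T j ⟨v, hFZ (b j) (Finset.mem_coe.mpr hv)⟩ n) ^ q) := by
    by_contra hcon
    push_neg at hcon
    have hgath : ∀ m : ℕ, ∃ c : ℝ, 0 < c ∧ ∀ N₀ : ℕ, ∃ j, N₀ < j ∧ ∃ x y : Z (b j),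
        0 ≤ (∑ n ∈ Finset.Ico (l j) (l (j+1)), dist (T j x n) (T j y n) ^ q) ∧
        (∑ n ∈ Finset.Ico (l j) (l (j+1)), dist (T j x n) (T j y n) ^ q) ≤
          ((2:ℝ)^m)⁻¹ * (dist (x:X) (y:X) ^ p) ∧
        c ≤ dist (x:X) (y:X) ^ p ∧ dist (x:X) (y:X) ^ p ≤ C ^ p := by
      intro m
      obtain ⟨k, hk1, hbad⟩ := hcon m
      have hk0 : (0:ℝ) < (k:ℝ) := by exact_mod_cast Nat.lt_of_lt_of_le Nat.zero_lt_one hk1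
      refine ⟨((k:ℝ)⁻¹) ^ p, by positivity, fun N₀ => ?_⟩
      obtain ⟨j, hj, u, v, hu, hv, hd1, hd2, hlt⟩ := hbad N₀
      refine ⟨j, hj, ⟨u, hFZ (b j) (Finset.mem_coe.mpr hu)⟩,
        ⟨v, hFZ (b j) (Finset.mem_coe.mpr hv)⟩,
        Finset.sum_nonneg fun n _ => Real.rpow_nonneg dist_nonneg q, ?_, ?_, ?_⟩
      · show _ ≤ ((2:ℝ)^m)⁻¹ * (dist u v ^ p)
        refine hlt.le.trans ?_
        apply mul_le_mul_of_nonneg_right _ (Real.rpow_nonneg dist_nonneg p)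
        have h2m : (0:ℝ) < ((2:ℝ)^m)⁻¹ := by positivity
        have := Real.rpow_le_rpow_of_exponent_ge h2m
          (by rw [inv_le_one_iff₀]; right; exact one_le_pow₀ (by norm_num)) hq
          (z := (1:ℝ))
        rwa [Real.rpow_one] at this
      · show ((k:ℝ)⁻¹) ^ p ≤ dist u v ^ p
        exact Real.rpow_le_rpow (by positivity) hd1 hp0.le
      · show dist u v ^ p ≤ C ^ p
        exact Real.rpow_le_rpow dist_nonneg hd2.le hp0.le
    obtain ⟨x, y, hsum, hnot⟩ := gather dflt
      (fun j (x y : Z (b j)) => ∑ n ∈ Finset.Ico (l j) (l (j+1)),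
        dist (T j x n) (T j y n) ^ q)
      (fun j (x y : Z (b j)) => dist (x:X) (y:X) ^ p)
      hSgd hVpd (C ^ p) (Real.rpow_nonneg hC.le p) hgath
    exact hnot ((hTiff x y).mpr hsum)
  obtain ⟨mu, hmu⟩ := upper
  obtain ⟨ml, hml⟩ := lower
  refine ⟨max mu ml, fun k hk => ?_⟩
  obtain ⟨Nu, hNu⟩ := hmu k hk
  obtain ⟨Nl, hNl⟩ := hml k hk
  refine ⟨max Nu Nl, fun j hj u v hu hv hd1 hd2 => ?_⟩
  have hju : Nu < j := lt_of_le_of_lt (le_max_left _ _) hj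
  have hjl : Nl < j := lt_of_le_of_lt (le_max_right _ _) hj
  have hup := hNu j hju u v hu hv hd1 hd2
  have hlo := hNl j hjl u v hu hv hd1 hd2
  set s : ℝ := ∑ n ∈ Finset.Ico (l j) (l (j + 1)),
      dist (T j ⟨u, hFZ (b j) (Finset.mem_coe.mpr hu)⟩ n)
           (T j ⟨v, hFZ (b j) (Finset.mem_coe.mpr hv)⟩ n) ^ q with hs
  have hs0 : 0 ≤ s := Finset.sum_nonneg fun n _ => Real.rpow_nonneg dist_nonneg q
  have hD0 : 0 < dist u v := lt_of_lt_of_le (by positivity) hd1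
  have halg : ∀ A : ℝ, 0 ≤ A → (A ^ q * dist u v ^ p) ^ (1/q) = A * dist u v ^ (p/q) := by
    intro A hA
    rw [Real.mul_rpow (Real.rpow_nonneg hA q) (Real.rpow_nonneg hD0.le p),
      ← Real.rpow_mul hA, ← Real.rpow_mul hD0.le, mul_one_div_cancel (ne_of_gt hq0),
      Real.rpow_one, mul_one_div]
  constructor
  · -- lower bound
    have h1 : ((((2:ℝ) ^ ml)⁻¹) ^ q * dist u v ^ p) ^ (1/q) ≤ s ^ (1/q) :=
      Real.rpow_le_rpow (by positivity) hlo (by positivity)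
    have h2 : ((((2:ℝ) ^ ml)⁻¹) ^ q * dist u v ^ p) ^ (1/q)
        = ((2:ℝ) ^ ml)⁻¹ * dist u v ^ (p/q) := halg _ (by positivity)
    have h3 : ((2:ℝ) ^ max mu ml)⁻¹ ≤ ((2:ℝ) ^ ml)⁻¹ := by
      apply inv_anti₀ (by positivity)
      exact pow_le_pow_right₀ (by norm_num) (le_max_right _ _)
    calc ((2:ℝ) ^ max mu ml)⁻¹ * dist u v ^ (p/q)
        ≤ ((2:ℝ) ^ ml)⁻¹ * dist u v ^ (p/q) := by
          apply mul_le_mul_of_nonneg_right h3 (Real.rpow_nonneg hD0.le _)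
      _ = ((((2:ℝ) ^ ml)⁻¹) ^ q * dist u v ^ p) ^ (1/q) := h2.symm
      _ ≤ s ^ (1/q) := h1
  · -- upper bound
    have h1 : s ^ (1/q) ≤ (((2:ℝ) ^ mu) ^ q * dist u v ^ p) ^ (1/q) :=
      Real.rpow_le_rpow hs0 hup (by positivity)
    have h2 : (((2:ℝ) ^ mu) ^ q * dist u v ^ p) ^ (1/q)
        = (2:ℝ) ^ mu * dist u v ^ (p/q) := halg _ (by positivity)
    have h3 : (2:ℝ) ^ mu ≤ (2:ℝ) ^ max mu ml :=
      pow_le_pow_right₀ (by norm_num) (le_max_left _ _)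
    calc s ^ (1/q) ≤ (((2:ℝ) ^ mu) ^ q * dist u v ^ p) ^ (1/q) := h1
      _ = (2:ℝ) ^ mu * dist u v ^ (p/q) := h2
      _ ≤ (2:ℝ) ^ max mu ml * dist u v ^ (p/q) := by
          apply mul_le_mul_of_nonneg_right h3 (Real.rpow_nonneg hD0.le _)
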